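/- Let 𝒱 be a nonzero finite-dimensional linear subspace of the disc algebra A(𝔻) and let ζ_1, …, ζ_m be distinct points on the unit circle such that no nonzero element of 𝒱 vanishes at all of ζ_1, …, ζ_m. Then sup{ ‖F‖_∞ / dist_∞(F, 𝒱) : F ∈ A(𝔻), F ≠ 0, F(ζ_1) = ⋯ = F(ζ_m) = 0 } = 1 + sup{ ‖V‖_∞ / max_{k=1,…,m} |V(ζ_k)| : V ∈ 𝒱, V ≠ 0 }. -/

import Mathlib

/-- `F` belongs to the disc algebra `A(𝔻)`: continuous on the closed unit disc and
holomorphic on the open unit disc. -/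
def MemDiscAlgebra (F : ℂ → ℂ) : Prop :=
  ContinuousOn F (Metric.closedBall 0 1) ∧ DifferentiableOn ℂ F (Metric.ball 0 1)

/-- The sup norm over the closed unit disc. -/
noncomputable def supNorm (F : ℂ → ℂ) : ℝ :=
  ⨆ z : Metric.closedBall (0 : ℂ) 1, ‖F (z : ℂ)‖

/-- The sup-norm distance from `F` to a subspace `𝒱` of functions. -/
noncomputable def distSup (F : ℂ → ℂ) (𝒱 : Submodule ℂ (ℂ → ℂ)) : ℝ :=
  ⨅ V : 𝒱, supNorm (F - (V : ℂ → ℂ))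

instance : Nonempty (Metric.closedBall (0:ℂ) 1) :=
  ⟨⟨0, Metric.mem_closedBall_self zero_le_one⟩⟩

lemma supNorm_nonneg (F : ℂ → ℂ) : 0 ≤ supNorm F :=
  Real.iSup_nonneg fun _ => norm_nonneg _

lemma bddAbove_norms {F : ℂ → ℂ} (hF : ContinuousOn F (Metric.closedBall 0 1)) :
    BddAbove (Set.range fun z : Metric.closedBall (0:ℂ) 1 => ‖F (z : ℂ)‖) := by
  have : (Set.range fun z : Metric.closedBall (0:ℂ) 1 => ‖F (z : ℂ)‖)
      = (fun z => ‖F z‖) '' (Metric.closedBall 0 1) := by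
    ext x; simp [Set.mem_image]
  rw [this]
  exact ((isCompact_closedBall (0:ℂ) 1).image_of_continuousOn hF.norm).bddAbove

lemma norm_le_supNorm {F : ℂ → ℂ} (hF : ContinuousOn F (Metric.closedBall 0 1))
    {z : ℂ} (hz : z ∈ Metric.closedBall (0:ℂ) 1) : ‖F z‖ ≤ supNorm F :=
  le_ciSup (bddAbove_norms hF) (⟨z, hz⟩ : Metric.closedBall (0:ℂ) 1)

lemma supNorm_le {F : ℂ → ℂ} {C : ℝ} (h : ∀ z ∈ Metric.closedBall (0:ℂ) 1, ‖F z‖ ≤ C) :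
    supNorm F ≤ C :=
  ciSup_le fun z => h z z.2

lemma distSup_nonneg (F : ℂ → ℂ) (𝒱 : Submodule ℂ (ℂ → ℂ)) : 0 ≤ distSup F 𝒱 :=
  le_ciInf fun _ => supNorm_nonneg _

lemma distSup_le (F : ℂ → ℂ) (𝒱 : Submodule ℂ (ℂ → ℂ)) (V : 𝒱) :
    distSup F 𝒱 ≤ supNorm (F - (V : ℂ → ℂ)) :=
  ciInf_le ⟨0, by rintro x ⟨W, rfl⟩; exact supNorm_nonneg _⟩ V

lemma lemmaA (𝒱 : Submodule ℂ (ℂ → ℂ)) (hfd : FiniteDimensional ℂ 𝒱)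
    (h𝒱 : ∀ V ∈ 𝒱, MemDiscAlgebra V)
    {m : ℕ} (hm : 0 < m) (ζ : Fin m → ℂ)
    (hvan : ∀ V ∈ 𝒱, (∀ k, V (ζ k) = 0) → V = 0) :
    ∃ C : ℝ, 0 ≤ C ∧ ∀ V ∈ 𝒱, supNorm V ≤ C * (⨆ k, ‖V (ζ k)‖) := by
  haveI : Nonempty (Fin m) := ⟨⟨0, hm⟩⟩
  set φ : 𝒱 →ₗ[ℂ] (Fin m → ℂ) :=
    { toFun := fun V => fun k => (V : ℂ → ℂ) (ζ k)
      map_add' := by intro V W; ext k; rfl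
      map_smul' := by intro c V; ext k; rfl } with hφ
  have hinjφ : Function.Injective φ := by
    rw [← LinearMap.ker_eq_bot, LinearMap.ker_eq_bot']
    intro V hV
    have : (V : ℂ → ℂ) = 0 := hvan V V.2 (fun k => congrFun hV k)
    exact Subtype.ext this
  let e : 𝒱 ≃ₗ[ℂ] LinearMap.range φ := LinearEquiv.ofInjective φ hinjφ
  haveI : FiniteDimensional ℂ (LinearMap.range φ) := e.finiteDimensional
  let n := Module.finrank ℂ (LinearMap.range φ)
  let b : Module.Basis (Fin n) ℂ (LinearMap.range φ) := Module.finBasis ℂ _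
  let L : (LinearMap.range φ) →ₗ[ℂ] 𝒱 := e.symm.toLinearMap
  let coordC : Fin n → (LinearMap.range φ) →L[ℂ] ℂ :=
    fun i => LinearMap.toContinuousLinearMap (b.coord i)
  let g : Fin n → ℂ → ℂ := fun i => ((L (b i) : 𝒱) : ℂ → ℂ)
  set C : ℝ := ∑ i, ‖coordC i‖ * supNorm (g i) with hC
  have hC0 : 0 ≤ C :=
    Finset.sum_nonneg fun i _ => mul_nonneg (ContinuousLinearMap.opNorm_nonneg _) (supNorm_nonneg _)
  refine ⟨C, hC0, fun V hV => ?_⟩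
  set v : 𝒱 := ⟨V, hV⟩
  set x : LinearMap.range φ := e v with hx
  have hMnn : 0 ≤ ⨆ k, ‖V (ζ k)‖ := Real.iSup_nonneg fun _ => norm_nonneg _
  have hxnorm : ‖x‖ ≤ ⨆ k, ‖V (ζ k)‖ := by
    have : (x : Fin m → ℂ) = φ v := rfl
    rw [show ‖x‖ = ‖(x : Fin m → ℂ)‖ from rfl, this]
    rw [pi_norm_le_iff_of_nonneg hMnn]
    intro k
    exact le_ciSup (f := fun k => ‖V (ζ k)‖) (Set.Finite.bddAbove (Set.finite_range _)) k
  have hrepr : v = ∑ i, b.repr x i • L (b i) := by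
    have h1 : ∑ i, b.repr x i • b i = x := b.sum_repr x
    have h2 : L x = v := by simp [L, hx]
    rw [← h2, ← h1, map_sum]
    simp
  have hfun : ∀ z, V z = ∑ i, b.repr x i • g i z := by
    intro z
    have : V = ((∑ i, b.repr x i • L (b i) : 𝒱) : ℂ → ℂ) := by
      rw [← hrepr]
    rw [this]
    push_cast
    simp [g, Finset.sum_apply, Pi.smul_apply]
  refine supNorm_le fun z hz => ?_
  rw [hfun z]
  calc ‖∑ i, b.repr x i • g i z‖ ≤ ∑ i, ‖b.repr x i • g i z‖ := norm_sum_le _ _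
    _ ≤ ∑ i, ‖coordC i‖ * ‖x‖ * supNorm (g i) := by
        refine Finset.sum_le_sum fun i _ => ?_
        rw [norm_smul]
        have h1 : ‖b.repr x i‖ ≤ ‖coordC i‖ * ‖x‖ := by
          have := (coordC i).le_opNorm x
          simpa [coordC, Module.Basis.coord_apply] using this
        have h2 : ‖g i z‖ ≤ supNorm (g i) :=
          norm_le_supNorm (h𝒱 _ (e.symm (b i)).2).1 hz
        exact mul_le_mul h1 h2 (norm_nonneg _)
          (mul_nonneg (ContinuousLinearMap.opNorm_nonneg _) (norm_nonneg _))
    _ ≤ ∑ i, ‖coordC i‖ * supNorm (g i) * (⨆ k, ‖V (ζ k)‖) := by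
        refine Finset.sum_le_sum fun i _ => ?_
        have := mul_le_mul_of_nonneg_left hxnorm (ContinuousLinearMap.opNorm_nonneg (coordC i))
        calc ‖coordC i‖ * ‖x‖ * supNorm (g i)
            ≤ ‖coordC i‖ * (⨆ k, ‖V (ζ k)‖) * supNorm (g i) := by
              exact mul_le_mul_of_nonneg_right this (supNorm_nonneg _)
          _ = ‖coordC i‖ * supNorm (g i) * (⨆ k, ‖V (ζ k)‖) := by ring
    _ = C * (⨆ k, ‖V (ζ k)‖) := by rw [hC, Finset.sum_mul]

lemma prod_diff_bound {ι : Type*} [DecidableEq ι] (s : Finset ι) (f g : ι → ℂ) (B : ℝ)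
    (hB : 1 ≤ B) (hf : ∀ i ∈ s, ‖f i‖ ≤ B) (hg : ∀ i ∈ s, ‖g i‖ ≤ B) :
    ‖∏ i ∈ s, f i - ∏ i ∈ s, g i‖ ≤ B ^ s.card * ∑ i ∈ s, ‖f i - g i‖ := by
  classical
  induction s using Finset.induction_on with
  | empty => simp
  | @insert a s ha ih =>
    have hfs : ∀ i ∈ s, ‖f i‖ ≤ B := fun i hi => hf i (Finset.mem_insert_of_mem hi)
    have hgs : ∀ i ∈ s, ‖g i‖ ≤ B := fun i hi => hg i (Finset.mem_insert_of_mem hi)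
    have hBc : (0:ℝ) ≤ B ^ s.card := pow_nonneg (le_trans zero_le_one hB) _
    rw [Finset.prod_insert ha, Finset.prod_insert ha, Finset.sum_insert ha,
      Finset.card_insert_of_notMem ha]
    have key : f a * ∏ i ∈ s, f i - g a * ∏ i ∈ s, g i
        = f a * (∏ i ∈ s, f i - ∏ i ∈ s, g i) + (f a - g a) * ∏ i ∈ s, g i := by ring
    rw [key]
    have h1 : ‖f a * (∏ i ∈ s, f i - ∏ i ∈ s, g i)‖ ≤ B * (B ^ s.card * ∑ i ∈ s, ‖f i - g i‖) := by
      rw [norm_mul]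
      exact mul_le_mul (hf a (Finset.mem_insert_self a s)) (ih hfs hgs) (norm_nonneg _)
        (le_trans zero_le_one hB)
    have h2 : ‖(f a - g a) * ∏ i ∈ s, g i‖ ≤ ‖f a - g a‖ * B ^ s.card := by
      rw [norm_mul]
      refine mul_le_mul_of_nonneg_left ?_ (norm_nonneg _)
      rw [norm_prod]
      calc ∏ i ∈ s, ‖g i‖ ≤ ∏ _i ∈ s, B :=
            Finset.prod_le_prod (fun i _ => norm_nonneg _) hgs
        _ = B ^ s.card := Finset.prod_const B
    calc ‖_ + _‖ ≤ _ := norm_add_le _ _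
      _ ≤ B * (B ^ s.card * ∑ i ∈ s, ‖f i - g i‖) + ‖f a - g a‖ * B ^ s.card := add_le_add h1 h2
      _ ≤ B ^ (s.card + 1) * (∑ i ∈ s, ‖f i - g i‖ + ‖f a - g a‖) := by
          rw [pow_succ]
          have hs : (0:ℝ) ≤ ∑ i ∈ s, ‖f i - g i‖ := Finset.sum_nonneg fun _ _ => norm_nonneg _
          nlinarith [norm_nonneg (f a - g a), mul_le_mul_of_nonneg_left hB
            (mul_nonneg hBc (norm_nonneg (f a - g a)))]
      _ = B ^ (s.card + 1) * (‖f a - g a‖ + ∑ i ∈ s, ‖f i - g i‖) := by ring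

lemma unorm_le_one {η z : ℂ} (hη : ‖η‖ = 1) (hz : ‖z‖ ≤ 1) :
    ‖(1 + (starRingEnd ℂ) η * z) / 2‖ ≤ 1 := by
  rw [norm_div]
  have h2 : ‖(2:ℂ)‖ = 2 := by norm_num
  rw [h2]
  have : ‖1 + (starRingEnd ℂ) η * z‖ ≤ 2 := by
    calc ‖1 + (starRingEnd ℂ) η * z‖ ≤ ‖(1:ℂ)‖ + ‖(starRingEnd ℂ) η * z‖ := norm_add_le _ _
      _ ≤ 1 + 1 := by
          refine add_le_add (by simp) ?_
          rw [norm_mul]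
          have : ‖(starRingEnd ℂ) η‖ = 1 := by rwa [RCLike.norm_conj]
          rw [this, one_mul]; exact hz
      _ = 2 := by norm_num
  linarith

lemma dist_sq_le {η z : ℂ} (hη : ‖η‖ = 1) (hz : ‖z‖ ≤ 1) :
    ‖z - η‖ ^ 2 ≤ 8 * (1 - ‖(1 + (starRingEnd ℂ) η * z) / 2‖) := by
  set u := (1 + (starRingEnd ℂ) η * z) / 2 with hu
  have hu1 : ‖u‖ ≤ 1 := unorm_le_one hη hz
  have e1 : ∀ w : ℂ, ‖w‖ ^ 2 = Complex.normSq w := fun w => by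
    rw [Complex.sq_norm]
  have hre : ‖z - η‖ ^ 2 = ‖z‖ ^ 2 + 1 - 2 * (z * (starRingEnd ℂ) η).re := by
    rw [e1 (z - η), Complex.normSq_sub]
    have h2 : Complex.normSq η = 1 := by rw [← e1, hη]; norm_num
    rw [h2, ← e1 z]
  have h4u : 4 * ‖u‖ ^ 2 ≤ 2 + 2 * (z * (starRingEnd ℂ) η).re := by
    have : ‖u‖ ^ 2 = Complex.normSq (1 + (starRingEnd ℂ) η * z) / 4 := by
      rw [hu, norm_div, div_pow, e1]
      norm_num
    rw [this, Complex.normSq_add]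
    have hmul : Complex.normSq ((starRingEnd ℂ) η * z) ≤ 1 := by
      rw [Complex.normSq_mul, Complex.normSq_conj]
      have hz2 : Complex.normSq z ≤ 1 := by
        rw [← e1]; nlinarith [norm_nonneg z]
      have hη2 : Complex.normSq η = 1 := by rw [← e1, hη]; norm_num
      rw [hη2, one_mul]; exact hz2
    have hre2 : (1 * (starRingEnd ℂ) ((starRingEnd ℂ) η * z)).re = (z * (starRingEnd ℂ) η).re := by
      simp [map_mul, mul_comm]
    rw [Complex.normSq_one, hre2]
    linarith
  nlinarith [norm_nonneg u, norm_nonneg (z - η), norm_nonneg z, hz, hu1,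
    sq_nonneg (‖u‖ - 1)]

set_option maxHeartbeats 1600000 in
lemma interp {n : ℕ} (hn : 2 ≤ n) (η : Fin n → ℂ) (hη : ∀ j, ‖η j‖ = 1)
    (hinj : Function.Injective η) (w : Fin n → ℂ) (M : ℝ) (hM : ∀ j, ‖w j‖ ≤ M)
    {ε : ℝ} (hε : 0 < ε) :
    ∃ G : ℂ → ℂ, Differentiable ℂ G ∧ (∀ j, G (η j) = w j) ∧
      ∀ z ∈ Metric.closedBall (0:ℂ) 1, ‖G z‖ ≤ (1 + ε) * M := by
  classical
  have hn0 : 0 < n := by omega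
  have hn1 : 1 < n := by omega
  haveI : Nonempty (Fin n) := ⟨⟨0, hn0⟩⟩
  have hM0 : 0 ≤ M := le_trans (norm_nonneg _) (hM ⟨0, hn0⟩)
  have hηne : ∀ {i j : Fin n}, i ≠ j → η i - η j ≠ 0 := by
    intro i j hij
    exact sub_ne_zero.mpr (fun h => hij (hinj h))
  -- minimal separation
  obtain ⟨d, hd_pos, hd2, hd_le⟩ :
      ∃ d : ℝ, 0 < d ∧ d ≤ 2 ∧ ∀ i j : Fin n, i ≠ j → d ≤ ‖η i - η j‖ := by
    classical
    set g : Fin n × Fin n → ℝ := fun p => if p.1 = p.2 then 2 else ‖η p.1 - η p.2‖ with hg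
    refine ⟨Finset.univ.inf' Finset.univ_nonempty g, ?_, ?_, ?_⟩
    · rw [Finset.lt_inf'_iff]
      intro p _
      rw [hg]
      dsimp only
      split_ifs with h
      · norm_num
      · exact norm_pos_iff.mpr (hηne h)
    · have h1 : g (⟨0, hn0⟩, ⟨0, hn0⟩) = 2 := by rw [hg]; simp
      have := Finset.inf'_le g (Finset.mem_univ ((⟨0, hn0⟩ : Fin n), (⟨0, hn0⟩ : Fin n)))
      rwa [h1] at this
    · intro i j hij
      have h1 : g (i, j) = ‖η i - η j‖ := by rw [hg]; simp [hij]
      have := Finset.inf'_le g (Finset.mem_univ (i, j))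
      rwa [h1] at this
  set B : ℝ := 1 + 2 / d with hB
  have hB1 : 1 ≤ B := le_add_of_nonneg_right (div_nonneg (by norm_num) hd_pos.le)
  have hB0 : 0 ≤ B := le_trans zero_le_one hB1
  have hBn0 : 0 ≤ B ^ n := pow_nonneg hB0 _
  set u : Fin n → ℂ → ℂ := fun j z => (1 + (starRingEnd ℂ) (η j) * z) / 2 with hu
  set L : Fin n → ℂ → ℂ := fun j z => ∏ i ∈ Finset.univ.erase j, (z - η i) / (η j - η i)
    with hL
  have hLself : ∀ j, L j (η j) = 1 := by
    intro j
    rw [hL]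
    refine Finset.prod_eq_one fun i hi => ?_
    exact div_self (hηne (Finset.ne_of_mem_erase hi).symm)
  have hLother : ∀ i j, i ≠ j → L j (η i) = 0 := by
    intro i j hij
    rw [hL]
    refine Finset.prod_eq_zero (Finset.mem_erase.mpr ⟨hij, Finset.mem_univ i⟩) ?_
    simp
  have hfactor : ∀ (j i : Fin n), i ≠ j → ∀ z : ℂ, ‖z‖ ≤ 1 →
      ‖(z - η i) / (η j - η i)‖ ≤ B := by
    intro j i hij z hz
    rw [norm_div]
    have h1 : ‖z - η i‖ ≤ 2 := by
      calc ‖z - η i‖ ≤ ‖z‖ + ‖η i‖ := norm_sub_le _ _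
        _ ≤ 1 + 1 := by rw [hη]; linarith
        _ = 2 := by norm_num
    have h2 : d ≤ ‖η j - η i‖ := hd_le j i (Ne.symm hij)
    calc ‖z - η i‖ / ‖η j - η i‖ ≤ 2 / d := div_le_div₀ (by norm_num) h1 hd_pos h2
      _ ≤ B := le_add_of_nonneg_left zero_le_one
  have hLbound : ∀ j, ∀ z : ℂ, ‖z‖ ≤ 1 → ‖L j z‖ ≤ B ^ n := by
    intro j z hz
    rw [hL]
    simp only
    rw [norm_prod]
    calc ∏ i ∈ Finset.univ.erase j, ‖(z - η i) / (η j - η i)‖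
        ≤ ∏ _i ∈ Finset.univ.erase j, B :=
          Finset.prod_le_prod (fun i _ => norm_nonneg _)
            (fun i hi => hfactor j i (Finset.ne_of_mem_erase hi) z hz)
      _ = B ^ (Finset.univ.erase j).card := Finset.prod_const B
      _ ≤ B ^ n := by
          exact pow_le_pow_right₀ hB1 (le_trans Finset.card_erase_le (by simp))
  set K : ℝ := n * B ^ n / d with hK
  have hK_pos : 0 < K := by
    refine div_pos ?_ hd_pos
    have : (0:ℝ) < B ^ n := pow_pos (lt_of_lt_of_le zero_lt_one hB1) _
    positivity
  have hLdiff : ∀ j, ∀ z : ℂ, ‖z‖ ≤ 1 → ‖L j z - 1‖ ≤ K * ‖z - η j‖ := by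
    intro j z hz
    have h0 := prod_diff_bound (Finset.univ.erase j)
      (fun i => (z - η i) / (η j - η i)) (fun _ => 1) B hB1
      (fun i hi => hfactor j i (Finset.ne_of_mem_erase hi) z hz)
      (fun i _ => by simpa using hB1)
    rw [Finset.prod_const_one] at h0
    have h0' : ‖L j z - 1‖ ≤ B ^ (Finset.univ.erase j).card
        * ∑ i ∈ Finset.univ.erase j, ‖(z - η i) / (η j - η i) - 1‖ := h0
    have hbd : ∀ i ∈ Finset.univ.erase j,
        ‖(z - η i) / (η j - η i) - 1‖ ≤ ‖z - η j‖ / d := by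
      intro i hi
      have hij : i ≠ j := Finset.ne_of_mem_erase hi
      have hne : η j - η i ≠ 0 := hηne (Ne.symm hij)
      have heq : (z - η i) / (η j - η i) - 1 = (z - η j) / (η j - η i) := by
        field_simp; ring
      rw [heq, norm_div]
      exact div_le_div_of_nonneg_left (norm_nonneg _) hd_pos (hd_le j i (Ne.symm hij))
    have hsum : ∑ i ∈ Finset.univ.erase j, ‖(z - η i) / (η j - η i) - 1‖
        ≤ (Finset.univ.erase j).card * (‖z - η j‖ / d) := by
      have := Finset.sum_le_card_nsmul (Finset.univ.erase j)
        (fun i => ‖(z - η i) / (η j - η i) - 1‖) (‖z - η j‖ / d) hbd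
      simpa [nsmul_eq_mul] using this
    have hcard : ((Finset.univ.erase j).card : ℝ) ≤ n := by
      have := Finset.card_erase_le (a := j) (s := (Finset.univ : Finset (Fin n)))
      have h2 : (Finset.univ : Finset (Fin n)).card = n := by simp
      exact_mod_cast le_trans this (le_of_eq h2)
    calc ‖L j z - 1‖ ≤ B ^ (Finset.univ.erase j).card *
          ∑ i ∈ Finset.univ.erase j, ‖(z - η i) / (η j - η i) - 1‖ := h0'
      _ ≤ B ^ n * ((n : ℝ) * (‖z - η j‖ / d)) := by
          refine mul_le_mul (pow_le_pow_right₀ hB1 (le_trans (Finset.card_erase_le) (by simp)))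
            (le_trans hsum ?_) (Finset.sum_nonneg fun _ _ => norm_nonneg _) hBn0
          exact mul_le_mul_of_nonneg_right hcard (div_nonneg (norm_nonneg _) hd_pos.le)
      _ = K * ‖z - η j‖ := by rw [hK]; field_simp
  have huself : ∀ j, u j (η j) = 1 := by
    intro j
    rw [hu]
    simp only
    have : (starRingEnd ℂ) (η j) * η j = 1 := by
      rw [mul_comm, Complex.mul_conj]
      have : Complex.normSq (η j) = 1 := by
        have := hη j
        rw [← Complex.sq_norm, this]; norm_num
      rw [this]; norm_num
    rw [this]; norm_num
  have hubound : ∀ j, ∀ z : ℂ, ‖z‖ ≤ 1 → ‖u j z‖ ≤ 1 := fun j z hz =>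
    unorm_le_one (hη j) hz
  set c : ℝ := d ^ 2 / 33 with hc
  have hc_pos : 0 < c := by positivity
  have hc1 : c < 1 := by rw [hc]; nlinarith
  have hsep : ∀ z : ℂ, ‖z‖ ≤ 1 → ∀ i j : Fin n, i ≠ j →
      1 - c < ‖u i z‖ → 1 - c < ‖u j z‖ → False := by
    intro z hz i j hij hi hj
    have h1 : ‖z - η i‖ ^ 2 ≤ 8 * (1 - ‖u i z‖) := dist_sq_le (hη i) hz
    have h2 : ‖z - η j‖ ^ 2 ≤ 8 * (1 - ‖u j z‖) := dist_sq_le (hη j) hz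
    have h3 : d ≤ ‖η i - η j‖ := hd_le i j hij
    have h4 : ‖η i - η j‖ ≤ ‖z - η j‖ + ‖z - η i‖ := by
      have : η i - η j = (z - η j) - (z - η i) := by ring
      rw [this]
      exact norm_sub_le _ _
    have ha := norm_nonneg (z - η i)
    have hb := norm_nonneg (z - η j)
    nlinarith [sq_nonneg (‖z - η i‖ - ‖z - η j‖)]
  -- sqrt 8 facts
  have h8 : (2:ℝ) ≤ Real.sqrt 8 := by
    have h1 := Real.sq_sqrt (by norm_num : (0:ℝ) ≤ 8)
    have h2 := Real.sqrt_nonneg 8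
    nlinarith
  set θ : ℝ := ε / (3 * (n + 1) * (K * Real.sqrt 8 + 1)) with hθdef
  have hden : (0:ℝ) < 3 * (n + 1) * (K * Real.sqrt 8 + 1) := by
    have : (0:ℝ) < K * Real.sqrt 8 := mul_pos hK_pos (by linarith)
    positivity
  have hθ : 0 < θ := div_pos hε hden
  have hθeq : θ * (3 * (n + 1) * (K * Real.sqrt 8 + 1)) = ε := div_mul_cancel₀ ε hden.ne'
  have hKθ : K * Real.sqrt 8 * θ ≤ ε / 3 := by nlinarith [hθ.le, hK_pos.le, h8]
  have hnBθ : (n:ℝ) * B ^ n * θ ≤ ε / 3 := by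
    have hK8 : (n:ℝ) * B ^ n ≤ K * Real.sqrt 8 := by
      rw [hK]
      rw [div_mul_eq_mul_div, le_div_iff₀ hd_pos]
      have hnB : (0:ℝ) ≤ (n:ℝ) * B ^ n := by positivity
      nlinarith
    nlinarith [hθ.le]
  set γ : ℝ := min c (θ ^ 2) with hγdef
  have hγ_pos : 0 < γ := lt_min hc_pos (by positivity)
  have hγc : γ ≤ c := min_le_left _ _
  have hγ1 : γ < 1 := lt_of_le_of_lt hγc hc1
  have hsqγ : Real.sqrt γ ≤ θ := by
    calc Real.sqrt γ ≤ Real.sqrt (θ ^ 2) := Real.sqrt_le_sqrt (min_le_right _ _)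
      _ = θ := Real.sqrt_sq hθ.le
  obtain ⟨N, hN⟩ := exists_pow_lt_of_lt_one hθ (by linarith : 1 - γ < 1)
  refine ⟨fun z => ∑ j, w j * (L j z * (u j z) ^ N), ?_, ?_, ?_⟩
  · -- differentiable
    apply Differentiable.fun_sum
    intro j _
    apply Differentiable.mul (differentiable_const _)
    apply Differentiable.mul
    · rw [hL]
      apply Differentiable.fun_finsetProd
      intro i _
      exact (differentiable_id.sub_const _).div_const _
    · apply Differentiable.pow
      rw [hu]
      exact ((differentiable_const _).add ((differentiable_const _).mul
        differentiable_id)).div_const _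
  · -- values
    intro i
    show ∑ j, w j * (L j (η i) * (u j (η i)) ^ N) = w i
    rw [Finset.sum_eq_single i]
    · rw [hLself, huself, one_pow, mul_one, mul_one]
    · intro j _ hji
      rw [hLother i j (Ne.symm hji), zero_mul, mul_zero]
    · intro h; exact absurd (Finset.mem_univ i) h
  · -- bound
    intro z hzD
    have hz : ‖z‖ ≤ 1 := by rwa [Metric.mem_closedBall, dist_zero_right] at hzD
    have hterm : ∀ j, ‖w j * (L j z * (u j z) ^ N)‖ = ‖w j‖ * (‖L j z‖ * ‖u j z‖ ^ N) := by
      intro j; rw [norm_mul, norm_mul, norm_pow]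
    have hfar : ∀ j, ‖u j z‖ ≤ 1 - γ → ‖w j * (L j z * (u j z) ^ N)‖ ≤ M * (B ^ n * θ) := by
      intro j hj
      rw [hterm j]
      have h1 : ‖u j z‖ ^ N ≤ (1 - γ) ^ N :=
        pow_le_pow_left₀ (norm_nonneg _) hj N
      have h2 : ‖L j z‖ * ‖u j z‖ ^ N ≤ B ^ n * θ := by
        refine mul_le_mul (hLbound j z hz) (le_trans h1 hN.le)
          (pow_nonneg (norm_nonneg _) _) hBn0
      exact mul_le_mul (hM j) h2 (mul_nonneg (norm_nonneg _)
        (pow_nonneg (norm_nonneg _) _)) hM0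
    have hnear : ∀ j, 1 - γ < ‖u j z‖ → ‖w j * (L j z * (u j z) ^ N)‖
        ≤ M * (1 + K * Real.sqrt 8 * θ) := by
      intro j hj
      rw [hterm j]
      have hdist : ‖z - η j‖ ≤ Real.sqrt 8 * θ := by
        have h1 : ‖z - η j‖ ^ 2 ≤ 8 * γ := by
          have := dist_sq_le (hη j) hz
          have h2 : 1 - ‖u j z‖ < γ := by linarith
          nlinarith
        have h2 : ‖z - η j‖ ≤ Real.sqrt (8 * γ) := by
          rw [← Real.sqrt_sq (norm_nonneg (z - η j))]
          exact Real.sqrt_le_sqrt h1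
        calc ‖z - η j‖ ≤ Real.sqrt (8 * γ) := h2
          _ = Real.sqrt 8 * Real.sqrt γ := Real.sqrt_mul (by norm_num) _
          _ ≤ Real.sqrt 8 * θ := by
              refine mul_le_mul_of_nonneg_left hsqγ (Real.sqrt_nonneg _)
      have hLz : ‖L j z‖ ≤ 1 + K * (Real.sqrt 8 * θ) := by
        calc ‖L j z‖ = ‖(L j z - 1) + 1‖ := by ring_nf
          _ ≤ ‖L j z - 1‖ + 1 := by simpa using norm_add_le (L j z - 1) 1
          _ ≤ K * ‖z - η j‖ + 1 := by linarith [hLdiff j z hz]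
          _ ≤ K * (Real.sqrt 8 * θ) + 1 := by
              have := mul_le_mul_of_nonneg_left hdist hK_pos.le
              linarith
          _ = 1 + K * (Real.sqrt 8 * θ) := by ring
      have huN : ‖u j z‖ ^ N ≤ 1 := pow_le_one₀ (norm_nonneg _) (hubound j z hz)
      have h3 : ‖L j z‖ * ‖u j z‖ ^ N ≤ 1 + K * (Real.sqrt 8 * θ) := by
        calc ‖L j z‖ * ‖u j z‖ ^ N ≤ (1 + K * (Real.sqrt 8 * θ)) * 1 :=
              mul_le_mul hLz huN (pow_nonneg (norm_nonneg _) _)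
                (by positivity)
          _ = 1 + K * (Real.sqrt 8 * θ) := mul_one _
      calc ‖w j‖ * (‖L j z‖ * ‖u j z‖ ^ N) ≤ M * (1 + K * (Real.sqrt 8 * θ)) :=
            mul_le_mul (hM j) h3 (mul_nonneg (norm_nonneg _)
              (pow_nonneg (norm_nonneg _) _)) hM0
        _ = M * (1 + K * Real.sqrt 8 * θ) := by ring
    have hsum : ‖∑ j, w j * (L j z * (u j z) ^ N)‖ ≤ ∑ j, ‖w j * (L j z * (u j z) ^ N)‖ :=
      norm_sum_le _ _
    by_cases hA : ∃ j0, 1 - γ < ‖u j0 z‖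
    · obtain ⟨j0, hj0⟩ := hA
      have hothers : ∀ j ∈ Finset.univ.erase j0, ‖w j * (L j z * (u j z) ^ N)‖
          ≤ M * (B ^ n * θ) := by
        intro j hj
        refine hfar j ?_
        by_contra hcon
        push_neg at hcon
        have hjc : 1 - c < ‖u j z‖ := lt_of_le_of_lt (by linarith) hcon
        have hj0c : 1 - c < ‖u j0 z‖ := lt_of_le_of_lt (by linarith) hj0
        exact hsep z hz j j0 (Finset.ne_of_mem_erase hj) hjc hj0c
      have hsplit : ∑ j, ‖w j * (L j z * (u j z) ^ N)‖
          = ‖w j0 * (L j0 z * (u j0 z) ^ N)‖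
            + ∑ j ∈ Finset.univ.erase j0, ‖w j * (L j z * (u j z) ^ N)‖ :=
        (Finset.add_sum_erase _ _ (Finset.mem_univ j0)).symm
      have hrest : ∑ j ∈ Finset.univ.erase j0, ‖w j * (L j z * (u j z) ^ N)‖
          ≤ (n : ℝ) * (M * (B ^ n * θ)) := by
        have h1 := Finset.sum_le_card_nsmul (Finset.univ.erase j0)
          (fun j => ‖w j * (L j z * (u j z) ^ N)‖) (M * (B ^ n * θ)) hothers
        have h2 : ((Finset.univ.erase j0).card : ℝ) ≤ n := by
          have := Finset.card_erase_le (a := j0) (s := (Finset.univ : Finset (Fin n)))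
          have h3 : (Finset.univ : Finset (Fin n)).card = n := by simp
          exact_mod_cast le_trans this (le_of_eq h3)
        rw [nsmul_eq_mul] at h1
        refine le_trans h1 (mul_le_mul_of_nonneg_right h2 (by positivity))
      calc ‖∑ j, w j * (L j z * (u j z) ^ N)‖
          ≤ ∑ j, ‖w j * (L j z * (u j z) ^ N)‖ := hsum
        _ ≤ M * (1 + K * Real.sqrt 8 * θ) + (n : ℝ) * (M * (B ^ n * θ)) := by
            rw [hsplit]
            exact add_le_add (hnear j0 hj0) hrest
        _ = M * (1 + K * Real.sqrt 8 * θ) + M * ((n : ℝ) * B ^ n * θ) := by ring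
        _ ≤ M * (1 + ε / 3) + M * (ε / 3) := by
            refine add_le_add (mul_le_mul_of_nonneg_left (by linarith) hM0)
              (mul_le_mul_of_nonneg_left hnBθ hM0)
        _ ≤ (1 + ε) * M := by nlinarith
    · push_neg at hA
      have hall : ∑ j, ‖w j * (L j z * (u j z) ^ N)‖ ≤ (n : ℝ) * (M * (B ^ n * θ)) := by
        have h1 := Finset.sum_le_card_nsmul (Finset.univ : Finset (Fin n))
          (fun j => ‖w j * (L j z * (u j z) ^ N)‖) (M * (B ^ n * θ))
          (fun j _ => hfar j (hA j))
        rw [nsmul_eq_mul] at h1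
        simpa using h1
      calc ‖∑ j, w j * (L j z * (u j z) ^ N)‖ ≤ (n : ℝ) * (M * (B ^ n * θ)) :=
            le_trans hsum hall
        _ = M * ((n : ℝ) * B ^ n * θ) := by ring
        _ ≤ M * (ε / 3) := mul_le_mul_of_nonneg_left hnBθ hM0
        _ ≤ (1 + ε) * M := by nlinarith

lemma exists_peak (V : ℂ → ℂ) (hV : MemDiscAlgebra V) {m : ℕ} (ζ : Fin m → ℂ)
    {δ : ℝ} (hδ : 0 < δ) :
    ∃ z0 : ℂ, ‖z0‖ = 1 ∧ (∀ k, z0 ≠ ζ k) ∧ supNorm V - δ ≤ ‖V z0‖ := by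
  classical
  have hdc : DiffContOnCl ℂ V (Metric.ball (0:ℂ) 1) :=
    ⟨hV.2, by rw [closure_ball (0:ℂ) one_ne_zero]; exact hV.1⟩
  have hsne : (Metric.sphere (0:ℂ) 1).Nonempty :=
    NormedSpace.sphere_nonempty.mpr zero_le_one
  obtain ⟨z1, hz1s, hmax⟩ := (isCompact_sphere (0:ℂ) 1).exists_isMaxOn hsne
    (hV.1.norm.mono Metric.sphere_subset_closedBall)
  have hz1n : ‖z1‖ = 1 := by simpa using hz1s
  have hsup : supNorm V ≤ ‖V z1‖ := by
    refine supNorm_le fun z hz => ?_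
    have hz' : z ∈ closure (Metric.ball (0:ℂ) 1) := by
      rwa [closure_ball (0:ℂ) one_ne_zero]
    refine Complex.norm_le_of_forall_mem_frontier_norm_le Metric.isBounded_ball hdc ?_ hz'
    intro w hw
    rw [frontier_ball (0:ℂ) one_ne_zero] at hw
    exact hmax hw
  set e : ℝ → ℂ := fun t => Complex.exp (t * Complex.I) * z1 with he
  have hemem : ∀ t, e t ∈ Metric.sphere (0:ℂ) 1 := by
    intro t
    simp only [he, mem_sphere_iff_norm, sub_zero, norm_mul, hz1n, mul_one]
    rw [Complex.norm_exp]
    simp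
  have hcont : Continuous fun t : ℝ => ‖V (e t)‖ := by
    have hec : Continuous e := by
      apply Continuous.mul _ continuous_const
      exact Complex.continuous_exp.comp (Complex.continuous_ofReal.mul continuous_const)
    have : ContinuousOn (fun t : ℝ => V (e t)) Set.univ := by
      refine ContinuousOn.comp hV.1 hec.continuousOn ?_
      intro t _
      exact Metric.sphere_subset_closedBall (hemem t)
    exact (continuousOn_univ.mp this).norm
  have hO : IsOpen {t : ℝ | supNorm V - δ < ‖V (e t)‖} :=
    isOpen_lt continuous_const hcont
  have h0O : (0:ℝ) ∈ {t : ℝ | supNorm V - δ < ‖V (e t)‖} := by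
    have : e 0 = z1 := by simp [he]
    simp only [Set.mem_setOf_eq, this]
    linarith
  obtain ⟨r, hr, hball⟩ := Metric.isOpen_iff.mp hO 0 h0O
  set ρ : ℝ := min r 1 with hρ
  have hρ0 : 0 < ρ := lt_min hr zero_lt_one
  set t : Fin (m+1) → ℝ := fun i => ρ * ((i:ℝ) + 1) / (m + 2) with ht
  have htmem : ∀ i, t i ∈ Metric.ball (0:ℝ) r := by
    intro i
    have h1 : 0 < t i := by
      rw [ht]
      have : (0:ℝ) < (i:ℝ) + 1 := by positivity
      positivity
    have h2 : t i < ρ := by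
      rw [ht]
      rw [div_lt_iff₀ (by positivity : (0:ℝ) < (m:ℝ) + 2)]
      have hi : (i:ℝ) + 1 < (m:ℝ) + 2 := by
        have : (i:ℝ) ≤ m := by exact_mod_cast Fin.is_le i
        linarith
      nlinarith
    rw [Metric.mem_ball, dist_zero_right, Real.norm_eq_abs, abs_of_pos h1]
    exact lt_of_lt_of_le h2 (min_le_left _ _)
  have htbound : ∀ i, |t i| ≤ 1 := by
    intro i
    have h1 : 0 < t i := by
      rw [ht]; have : (0:ℝ) < (i:ℝ) + 1 := by positivity
      positivity
    have h2 : t i < ρ := by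
      rw [ht, div_lt_iff₀ (by positivity : (0:ℝ) < (m:ℝ) + 2)]
      have hi : (i:ℝ) + 1 < (m:ℝ) + 2 := by
        have : (i:ℝ) ≤ m := by exact_mod_cast Fin.is_le i
        linarith
      nlinarith
    rw [abs_of_pos h1]
    exact le_trans h2.le (le_trans (min_le_right _ _) le_rfl)
  have htinj : Function.Injective t := by
    intro i j hij
    rw [ht] at hij
    simp only at hij
    field_simp at hij
    have h : ((i:ℕ):ℝ) = ((j:ℕ):ℝ) := by linarith
    exact Fin.ext (by exact_mod_cast h)
  have heinj : Function.Injective (fun i => e (t i)) := by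
    intro i j hij
    simp only [he] at hij
    have hz1ne : z1 ≠ 0 := by
      intro h; rw [h] at hz1n; simp at hz1n
    have hexp : Complex.exp ((t i) * Complex.I) = Complex.exp ((t j) * Complex.I) :=
      mul_right_cancel₀ hz1ne hij
    have h1 : Complex.exp (((t i) : ℂ) * Complex.I - ((t j) : ℂ) * Complex.I) = 1 := by
      rw [Complex.exp_sub, hexp, div_self (Complex.exp_ne_zero _)]
    rw [Complex.exp_eq_one_iff] at h1
    obtain ⟨k, hk⟩ := h1
    have h2 : (((t i) - (t j) : ℝ) : ℂ) * Complex.I = (k : ℂ) * (2 * Real.pi) * Complex.I := by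
      push_cast
      push_cast at hk
      linear_combination hk
    have h3 : ((t i - t j : ℝ) : ℂ) = (k : ℂ) * (2 * Real.pi) :=
      mul_right_cancel₀ Complex.I_ne_zero h2
    have h4 : t i - t j = (k : ℝ) * (2 * Real.pi) := by
      exact_mod_cast h3
    have h5 : |t i - t j| ≤ 2 := by
      calc |t i - t j| ≤ |t i| + |t j| := abs_sub _ _
        _ ≤ 2 := by linarith [htbound i, htbound j]
    have hk0 : k = 0 := by
      by_contra hk0
      have : (1:ℝ) ≤ |(k:ℝ)| := by
        rw [← Int.cast_abs]
        exact_mod_cast Int.one_le_abs (by exact_mod_cast hk0)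
      have hπ : (3:ℝ) < Real.pi := Real.pi_gt_three
      rw [h4, abs_mul] at h5
      have : |2 * Real.pi| = 2 * Real.pi := abs_of_pos (by linarith)
      nlinarith [abs_nonneg ((k:ℝ))]
    rw [hk0] at h4
    simp at h4
    exact htinj (by linarith : t i = t j)
  by_cases hall : ∀ i : Fin (m+1), ∃ k : Fin m, e (t i) = ζ k
  · exfalso
    choose f hf using hall
    obtain ⟨i, j, hij, hfij⟩ := Fintype.exists_ne_map_eq_of_card_lt f (by simp)
    have heq : e (t i) = e (t j) := by rw [hf i, hf j, hfij]
    exact hij (heinj heq)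
  · push_neg at hall
    obtain ⟨i, hi⟩ := hall
    refine ⟨e (t i), ?_, hi, ?_⟩
    · have := hemem (t i)
      rwa [mem_sphere_iff_norm, sub_zero] at this
    have := hball (htmem i)
    exact (lt_of_lt_of_le (by exact this) le_rfl).le

/-- The key observation on the compatibility indicator in the disc algebra:
`μ_A(ker L_ζ, 𝒱) = 1 + sup_{V ∈ 𝒱, V ≠ 0} ‖V‖_∞ / max_k |V(ζ_k)|`. -/
theorem stmt17 (𝒱 : Submodule ℂ (ℂ → ℂ)) (hfd : FiniteDimensional ℂ 𝒱) (h𝒱0 : 𝒱 ≠ ⊥)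
    (h𝒱 : ∀ V ∈ 𝒱, MemDiscAlgebra V)
    {m : ℕ} (hm : 0 < m) (ζ : Fin m → ℂ)
    (hζ : ∀ k, ‖ζ k‖ = 1) (hinj : Function.Injective ζ)
    (hvan : ∀ V ∈ 𝒱, (∀ k, V (ζ k) = 0) → V = 0) :
    sSup {x : ℝ | ∃ F : ℂ → ℂ, MemDiscAlgebra F ∧ F ≠ 0 ∧
        (∀ k, F (ζ k) = 0) ∧ x = supNorm F / distSup F 𝒱}
      = 1 + sSup {x : ℝ | ∃ V ∈ 𝒱, V ≠ 0 ∧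
        x = supNorm V / ⨆ k, ‖V (ζ k)‖} := by
  classical
  haveI : Nonempty (Fin m) := ⟨⟨0, hm⟩⟩
  set S := {x : ℝ | ∃ F : ℂ → ℂ, MemDiscAlgebra F ∧ F ≠ 0 ∧
      (∀ k, F (ζ k) = 0) ∧ x = supNorm F / distSup F 𝒱} with hSdef
  set T := {x : ℝ | ∃ V ∈ 𝒱, V ≠ 0 ∧ x = supNorm V / ⨆ k, ‖V (ζ k)‖} with hTdef
  have hnormζ : ∀ k, ‖ζ k‖ = 1 := fun k => by
    exact hζ k
  have hζmem : ∀ k, ζ k ∈ Metric.closedBall (0:ℂ) 1 := fun k => by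
    rw [Metric.mem_closedBall, dist_zero_right, hnormζ k]
  -- basic facts about M V := ⨆ k, ‖V (ζ k)‖
  have hMle : ∀ (V : ℂ → ℂ) (k : Fin m), ‖V (ζ k)‖ ≤ ⨆ k, ‖V (ζ k)‖ := fun V k =>
    le_ciSup (f := fun k => ‖V (ζ k)‖) (Set.Finite.bddAbove (Set.finite_range _)) k
  have hMnn : ∀ V : ℂ → ℂ, 0 ≤ ⨆ k, ‖V (ζ k)‖ := fun V =>
    Real.iSup_nonneg fun _ => norm_nonneg _
  have hMpos : ∀ V ∈ 𝒱, V ≠ 0 → 0 < ⨆ k, ‖V (ζ k)‖ := by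
    intro V hV hV0
    rcases lt_or_eq_of_le (hMnn V) with h | h
    · exact h
    · exfalso
      refine hV0 (hvan V hV fun k => ?_)
      have := hMle V k
      rw [← h] at this
      exact norm_eq_zero.mp (le_antisymm this (norm_nonneg _))
  have hMsup : ∀ V ∈ 𝒱, (⨆ k, ‖V (ζ k)‖) ≤ supNorm V := by
    intro V hV
    exact ciSup_le fun k => norm_le_supNorm (h𝒱 V hV).1 (hζmem k)
  -- T is nonempty and bounded above
  obtain ⟨V₀, hV₀mem, hV₀0⟩ := Submodule.exists_mem_ne_zero_of_ne_bot h𝒱0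
  have hT_ne : (supNorm V₀ / ⨆ k, ‖V₀ (ζ k)‖) ∈ T := ⟨V₀, hV₀mem, hV₀0, rfl⟩
  obtain ⟨C₀, hC₀0, hC₀⟩ := lemmaA 𝒱 hfd h𝒱 hm ζ hvan
  have hT_bdd : ∀ t ∈ T, t ≤ C₀ := by
    rintro t ⟨V, hV, hV0, rfl⟩
    rw [div_le_iff₀ (hMpos V hV hV0)]
    exact hC₀ V hV
  have hT_bddAbove : BddAbove T := ⟨C₀, fun t ht => hT_bdd t ht⟩
  have hT_ge1 : ∀ t ∈ T, 1 ≤ t := by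
    rintro t ⟨V, hV, hV0, rfl⟩
    rw [le_div_iff₀ (hMpos V hV hV0), one_mul]
    exact hMsup V hV
  set Cs : ℝ := sSup T with hCsdef
  have hCs1 : 1 ≤ Cs := le_trans (hT_ge1 _ hT_ne) (le_csSup hT_bddAbove hT_ne)
  have hCs0 : 0 ≤ Cs := by linarith
  have hVleCs : ∀ V ∈ 𝒱, supNorm V ≤ Cs * ⨆ k, ‖V (ζ k)‖ := by
    intro V hV
    by_cases hV0 : V = (0 : ℂ → ℂ)
    · have h1 : supNorm V = 0 := by
        rw [hV0]
        refine le_antisymm (supNorm_le fun z _ => by simp) (supNorm_nonneg _)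
      rw [h1]
      exact mul_nonneg hCs0 (hMnn V)
    · have ht : (supNorm V / ⨆ k, ‖V (ζ k)‖) ∈ T := ⟨V, hV, hV0, rfl⟩
      have := le_csSup hT_bddAbove ht
      rwa [div_le_iff₀ (hMpos V hV hV0)] at this
  -- master inequality
  have master : ∀ F : ℂ → ℂ, MemDiscAlgebra F → (∀ k, F (ζ k) = 0) →
      supNorm F ≤ (1 + Cs) * distSup F 𝒱 := by
    intro F hF hFz
    have hpos : (0:ℝ) < 1 + Cs := by linarith
    have key : ∀ V : 𝒱, supNorm F ≤ (1 + Cs) * supNorm (F - (V : ℂ → ℂ)) := by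
      intro V
      have hVd := h𝒱 V V.2
      have hFVc : ContinuousOn (F - (V : ℂ → ℂ)) (Metric.closedBall 0 1) :=
        hF.1.sub hVd.1
      have h2 : (⨆ k, ‖(V : ℂ → ℂ) (ζ k)‖) ≤ supNorm (F - (V : ℂ → ℂ)) := by
        refine ciSup_le fun k => ?_
        have heq : ‖(V : ℂ → ℂ) (ζ k)‖ = ‖(F - (V : ℂ → ℂ)) (ζ k)‖ := by
          rw [Pi.sub_apply, hFz k, zero_sub, norm_neg]
        rw [heq]
        exact norm_le_supNorm hFVc (hζmem k)
      have h1 : supNorm (V : ℂ → ℂ) ≤ Cs * ⨆ k, ‖(V : ℂ → ℂ) (ζ k)‖ := hVleCs _ V.2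
      have h3 : supNorm F ≤ supNorm (F - (V : ℂ → ℂ)) + supNorm (V : ℂ → ℂ) := by
        refine supNorm_le fun z hz => ?_
        have : F z = (F - (V : ℂ → ℂ)) z + (V : ℂ → ℂ) z := by
          rw [Pi.sub_apply]; ring
        rw [this]
        exact le_trans (norm_add_le _ _) (add_le_add (norm_le_supNorm hFVc hz)
          (norm_le_supNorm hVd.1 hz))
      nlinarith [hMnn (V : ℂ → ℂ), supNorm_nonneg (F - (V : ℂ → ℂ))]
    have hinf : supNorm F / (1 + Cs) ≤ distSup F 𝒱 :=
      le_ciInf fun V => (div_le_iff₀ hpos).mpr (by rw [mul_comm]; exact key V)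
    calc supNorm F = supNorm F / (1 + Cs) * (1 + Cs) := by field_simp
      _ ≤ distSup F 𝒱 * (1 + Cs) := mul_le_mul_of_nonneg_right hinf hpos.le
      _ = (1 + Cs) * distSup F 𝒱 := mul_comm _ _
  -- upper bound for S
  have hS_bdd : ∀ x ∈ S, x ≤ 1 + Cs := by
    rintro x ⟨F, hF, hF0, hFz, rfl⟩
    rcases eq_or_lt_of_le (distSup_nonneg F 𝒱) with h | h
    · rw [← h, div_zero]; linarith
    · rw [div_le_iff₀ h]
      exact master F hF hFz
  -- construction for the lower bound
  have claim : ∀ V ∈ 𝒱, V ≠ 0 → ∀ ε : ℝ, 0 < ε → ε < 1 →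
      ∃ x ∈ S, (1 + supNorm V / ⨆ k, ‖V (ζ k)‖)
        - ε * (supNorm V / (⨆ k, ‖V (ζ k)‖) + 2) ≤ x := by
    intro V hV hV0 ε hε hε1
    have hVd := h𝒱 V hV
    have hMV0 : 0 < ⨆ k, ‖V (ζ k)‖ := hMpos V hV hV0
    set MV : ℝ := ⨆ k, ‖V (ζ k)‖ with hMVdef
    have hsN0 : 0 < supNorm V := lt_of_lt_of_le hMV0 (hMsup V hV)
    set sN : ℝ := supNorm V with hsNdef
    obtain ⟨z0, hz01, hz0ζ, hz0V⟩ := exists_peak V hVd ζ (δ := ε * MV) (by positivity)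
    have hMVsN : MV ≤ sN := hMsup V hV
    have hz0pos : 0 < ‖V z0‖ := by nlinarith
    -- interpolation data
    set η : Fin (m+1) → ℂ := Fin.cons z0 ζ with hη
    set w : Fin (m+1) → ℂ := Fin.cons (-(((MV / ‖V z0‖ : ℝ)) : ℂ) * V z0)
      (fun k => V (ζ k)) with hw
    have hηnorm : ∀ j, ‖η j‖ = 1 := by
      intro j
      refine Fin.cases ?_ ?_ j
      · rw [hη, Fin.cons_zero]; exact hz01
      · intro i; rw [hη, Fin.cons_succ]; exact hnormζ i
    have hηinj : Function.Injective η := by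
      rw [hη]
      rw [Fin.cons_injective_iff]
      refine ⟨?_, hinj⟩
      rintro ⟨k, hk⟩
      exact hz0ζ k hk.symm
    have hwbound : ∀ j, ‖w j‖ ≤ MV := by
      intro j
      refine Fin.cases ?_ ?_ j
      · rw [hw, Fin.cons_zero, norm_mul, norm_neg]
        rw [Complex.norm_real, Real.norm_eq_abs, abs_of_nonneg
          (div_nonneg hMV0.le (norm_nonneg _))]
        rw [div_mul_cancel₀ _ hz0pos.ne']
      · intro i; rw [hw, Fin.cons_succ]; exact hMle V i
    obtain ⟨G, hGdiff, hGval, hGbound⟩ := interp (by omega : 2 ≤ m + 1) η hηnorm hηinj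
      w MV hwbound hε
    set F : ℂ → ℂ := fun z => V z - G z with hF
    have hFdisc : MemDiscAlgebra F :=
      ⟨hVd.1.sub hGdiff.continuous.continuousOn, hVd.2.sub hGdiff.differentiableOn⟩
    have hFz : ∀ k, F (ζ k) = 0 := by
      intro k
      have h1 : G (ζ k) = V (ζ k) := by
        have := hGval k.succ
        rw [hη, Fin.cons_succ] at this
        rw [this, hw, Fin.cons_succ]
      rw [hF]
      simp only
      rw [h1, sub_self]
    have hGz0 : G z0 = -(((MV / ‖V z0‖ : ℝ)) : ℂ) * V z0 := by
      have := hGval 0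
      rw [hη, Fin.cons_zero] at this
      rw [this, hw, Fin.cons_zero]
    have hFz0 : ‖F z0‖ = ‖V z0‖ + MV := by
      have h1 : F z0 = ((1 + MV / ‖V z0‖ : ℝ) : ℂ) * V z0 := by
        rw [hF]
        simp only
        rw [hGz0]
        push_cast
        ring
      rw [h1, norm_mul, Complex.norm_real, Real.norm_eq_abs, abs_of_pos
        (by positivity : (0:ℝ) < 1 + MV / ‖V z0‖)]
      rw [add_mul, one_mul, div_mul_cancel₀ _ hz0pos.ne']
    have hF0 : F ≠ 0 := by
      intro h
      have : F z0 = 0 := by rw [h]; rfl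
      rw [this, norm_zero] at hFz0
      nlinarith
    have hz0mem : z0 ∈ Metric.closedBall (0:ℂ) 1 := by
      rw [Metric.mem_closedBall, dist_zero_right, hz01]
    have hFsup : ‖V z0‖ + MV ≤ supNorm F := by
      rw [← hFz0]
      exact norm_le_supNorm hFdisc.1 hz0mem
    have hsupF0 : 0 < supNorm F := lt_of_lt_of_le (by nlinarith) hFsup
    have hdistle : distSup F 𝒱 ≤ (1 + ε) * MV := by
      refine le_trans (distSup_le F 𝒱 ⟨V, hV⟩) ?_
      refine supNorm_le fun z hz => ?_
      have : (F - (V : ℂ → ℂ)) z = -(G z) := by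
        simp only [Pi.sub_apply, hF]
        ring
      rw [this, norm_neg]
      exact hGbound z hz
    have hdistpos : 0 < distSup F 𝒱 := by
      by_contra hcon
      push_neg at hcon
      have h1 := master F hFdisc hFz
      nlinarith
    refine ⟨supNorm F / distSup F 𝒱, ⟨F, hFdisc, hF0, hFz, rfl⟩, ?_⟩
    have step1 : supNorm F / ((1 + ε) * MV) ≤ supNorm F / distSup F 𝒱 :=
      div_le_div_of_nonneg_left hsupF0.le hdistpos hdistle
    have step2 : (sN + MV - ε * MV) / ((1 + ε) * MV) ≤ supNorm F / ((1 + ε) * MV) := by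
      have hden : (0:ℝ) < (1 + ε) * MV := by positivity
      refine (div_le_div_iff_of_pos_right hden).mpr ?_
      nlinarith
    have step3 : (1 + sN / MV) - ε * (sN / MV + 2)
        ≤ (sN + MV - ε * MV) / ((1 + ε) * MV) := by
      rw [le_div_iff₀ (by positivity : (0:ℝ) < (1 + ε) * MV)]
      have ht : sN / MV * MV = sN := div_mul_cancel₀ _ hMV0.ne'
      have htnn : 0 ≤ sN / MV := by positivity
      nlinarith [ht, mul_nonneg (mul_nonneg hε.le hε.le) (mul_nonneg htnn hMV0.le),
        mul_nonneg (mul_nonneg hε.le hε.le) hMV0.le]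
    exact le_trans step3 (le_trans step2 step1)
  -- S is nonempty and bounded above
  obtain ⟨x₀, hx₀S, _⟩ := claim V₀ hV₀mem hV₀0 (1/2) (by norm_num) (by norm_num)
  have hS_ne : S.Nonempty := ⟨x₀, hx₀S⟩
  have hS_bddAbove : BddAbove S := ⟨1 + Cs, fun x hx => hS_bdd x hx⟩
  -- lower bound: 1 + t ≤ sSup S for all t ∈ T
  have hlow : ∀ t ∈ T, 1 + t ≤ sSup S := by
    rintro t ⟨V, hV, hV0, rfl⟩
    set t := supNorm V / ⨆ k, ‖V (ζ k)‖ with htdef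
    have ht1 : 1 ≤ t := hT_ge1 t ⟨V, hV, hV0, rfl⟩
    refine le_of_forall_pos_le_add fun ε' hε' => ?_
    set ε : ℝ := min (ε' / (t + 2)) (1/2) with hεdef
    have hεpos : 0 < ε := lt_min (by positivity) (by norm_num)
    have hεlt1 : ε < 1 := lt_of_le_of_lt (min_le_right _ _) (by norm_num)
    obtain ⟨x, hxS, hx⟩ := claim V hV hV0 ε hεpos hεlt1
    have h1 : x ≤ sSup S := le_csSup hS_bddAbove hxS
    have h2 : ε * (t + 2) ≤ ε' := by
      have : ε ≤ ε' / (t + 2) := min_le_left _ _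
      rw [← le_div_iff₀ (by linarith : (0:ℝ) < t + 2)]
      exact this
    linarith
  have hupper : sSup S ≤ 1 + Cs := csSup_le hS_ne hS_bdd
  have hlower : 1 + Cs ≤ sSup S := by
    have : Cs ≤ sSup S - 1 := csSup_le ⟨_, hT_ne⟩ fun t ht => by linarith [hlow t ht]
    linarith
  exact le_antisymm hupper hlower
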